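/- Let x = (d_E/d_S^{2k+1})(1 + y) and y = 1 − d_E/d_S^{2k+1}, and let E = (d_E² − 1)/(d_E(d_E d_S + 1)) · ((d_E² − 1)/((d_E d_S)² − 1))^k + 1/d_E. Define B = (1/2)·√(d_S^{2k+1}·E − 1) for d_E ≥ d_S^{2k+1}. Then, for fixed d_S ≥ 2 and k ≥ 0, B → 0 as d_E → ∞. -/

import Mathlib

open Filter Real

/-- With E(d_E) = (d_E²−1)/(d_E(d_E d_S+1))·((d_E²−1)/((d_E d_S)²−1))^k
+ 1/d_E, the Haar bound B(d_E) = (1/2)·√(d_S^{2k+1}·E(d_E) − 1) tends to 0 as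
d_E → ∞, for fixed d_S ≥ 2 and k ≥ 0. -/
theorem haar_bound_vanishes_large_environment (dS : ℝ) (hdS : 2 ≤ dS) (k : ℕ) :
    Tendsto
      (fun dE : ℝ =>
        (1 / 2) * Real.sqrt (dS ^ (2 * k + 1) *
          ((dE ^ 2 - 1) / (dE * (dE * dS + 1)) *
              ((dE ^ 2 - 1) / ((dE * dS) ^ 2 - 1)) ^ k + 1 / dE) - 1))
      atTop (nhds 0) := by
  have hdS0 : (0:ℝ) < dS := by linarith
  have hinv : Tendsto (fun dE : ℝ => 1 / dE) atTop (nhds 0) := by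
    simpa [one_div] using tendsto_inv_atTop_zero
  have hinv2 : Tendsto (fun dE : ℝ => 1 / dE ^ 2) atTop (nhds 0) := by
    have := hinv.mul hinv
    simpa [div_mul_div_comm, ← sq, mul_one] using this
  -- first factor
  have h1 : Tendsto (fun dE : ℝ => (dE ^ 2 - 1) / (dE * (dE * dS + 1))) atTop
      (nhds (1 / dS)) := by
    have hnum : Tendsto (fun dE : ℝ => 1 - 1 / dE ^ 2) atTop (nhds 1) := by
      simpa using tendsto_const_nhds.sub hinv2
    have hden : Tendsto (fun dE : ℝ => dS + 1 / dE) atTop (nhds dS) := by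
      simpa using tendsto_const_nhds.add hinv
    have := hnum.div hden hdS0.ne'
    rw [show (1:ℝ)/dS = 1/dS from rfl]
    refine Tendsto.congr' ?_ (by simpa using this)
    filter_upwards [eventually_gt_atTop (0:ℝ)] with x hx
    simp only [Pi.div_apply]
    have hx1 : dS + x⁻¹ ≠ 0 := by positivity
    field_simp
  -- second factor base
  have h2 : Tendsto (fun dE : ℝ => (dE ^ 2 - 1) / ((dE * dS) ^ 2 - 1)) atTop
      (nhds (1 / dS ^ 2)) := by
    have hnum : Tendsto (fun dE : ℝ => 1 - 1 / dE ^ 2) atTop (nhds 1) := by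
      simpa using tendsto_const_nhds.sub hinv2
    have hden : Tendsto (fun dE : ℝ => dS ^ 2 - 1 / dE ^ 2) atTop (nhds (dS ^ 2)) := by
      simpa using tendsto_const_nhds.sub hinv2
    have := hnum.div hden (by positivity)
    refine Tendsto.congr' ?_ (by simpa using this)
    filter_upwards [eventually_gt_atTop (1:ℝ)] with x hx
    have hx2 : x ^ 2 ≠ 0 := by positivity
    simp only [Pi.div_apply]
    have hx3 : dS ^ 2 - x⁻¹ ^ 2 ≠ 0 := by
      have : x⁻¹ ^ 2 < dS ^ 2 := by
        have h1x : x⁻¹ < dS := by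
          have := inv_lt_one_of_one_lt₀ hx; linarith
        exact pow_lt_pow_left₀ h1x (by positivity) (by norm_num)
      linarith
    field_simp
  -- inner expression
  have hE : Tendsto (fun dE : ℝ =>
      (dE ^ 2 - 1) / (dE * (dE * dS + 1)) *
        ((dE ^ 2 - 1) / ((dE * dS) ^ 2 - 1)) ^ k + 1 / dE) atTop
      (nhds (1 / dS * (1 / dS ^ 2) ^ k)) := by
    simpa using (h1.mul (h2.pow k)).add hinv
  have hinner : Tendsto (fun dE : ℝ =>
      dS ^ (2 * k + 1) *
        ((dE ^ 2 - 1) / (dE * (dE * dS + 1)) *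
            ((dE ^ 2 - 1) / ((dE * dS) ^ 2 - 1)) ^ k + 1 / dE) - 1) atTop (nhds 0) := by
    have := ((tendsto_const_nhds (x := dS ^ (2 * k + 1))).mul hE).sub (tendsto_const_nhds (x := (1:ℝ)))
    have hval : dS ^ (2 * k + 1) * (1 / dS * (1 / dS ^ 2) ^ k) - 1 = 0 := by
      rw [pow_add, pow_mul, pow_one]
      field_simp
      rw [← mul_pow, mul_one_div_cancel (pow_ne_zero 2 hdS0.ne'), one_pow, sub_self]
    rw [hval] at this
    exact this
  have hsqrt : Tendsto (fun x : ℝ => (1 / 2) * Real.sqrt x) (nhds 0) (nhds 0) := by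
    have : Continuous fun x : ℝ => (1 / 2) * Real.sqrt x :=
      continuous_const.mul Real.continuous_sqrt
    simpa using this.tendsto 0
  exact hsqrt.comp hinner
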